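/- As λ → 0⁺, the size-based balanced tree-pattern kernel of order h converges to the walk-count kernel of length h−1: lim_{λ→0} K^h_Size(G_1,G_2) = K^{h−1}_Walk(G_1,G_2), where K^n_Walk(G_1,G_2) counts pairs of identically-labeled walks of length n in G_1 and G_2. -/

import Mathlib

open scoped Classical

/-- A finite labeled directed graph: vertices `V`, edge relation `E`, vertex
labels `lv` and edge labels `le`, all labels taken in the alphabet `A`. -/
structure LGraph (A : Type) where
  V : Type
  [fintypeV : Fintype V]
  [decEqV : DecidableEq V]
  E : V → V → Prop
  [decE : DecidableRel E]
  lv : V → A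
  le : V → V → A

attribute [instance] LGraph.fintypeV LGraph.decEqV LGraph.decE

/-- A labeled rooted tree: a root label together with the list of children,
each child carrying the label of the edge connecting it to its parent and
the corresponding labeled subtree. -/
inductive LTree (A : Type) : Type where
  | node : A → List (A × LTree A) → LTree A

namespace LTree

variable {A : Type}

-- `size t` : number of nodes
mutual
def size : LTree A → ℕ
  | .node _ cs => 1 + sizeList cs
def sizeList : List (A × LTree A) → ℕ
  | [] => 0
  | (_, t) :: rest => size t + sizeList rest
end

-- `depth t` : maximal number of edges from the root to a node, plus one
mutual
def depth : LTree A → ℕ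
  | .node _ cs => 1 + depthList cs
def depthList : List (A × LTree A) → ℕ
  | [] => 0
  | (_, t) :: rest => max (depth t) (depthList rest)
end

-- `leaves t` : number of leaf nodes
mutual
def leaves : LTree A → ℕ
  | .node _ [] => 1
  | .node _ (c :: cs) => leavesList (c :: cs)
def leavesList : List (A × LTree A) → ℕ
  | [] => 0
  | (_, t) :: rest => leaves t + leavesList rest
end

/-- branching cardinality: number of leaves minus one -/
def branch (t : LTree A) : ℕ := t.leaves - 1

-- `balanced t h` : `t` is perfectly depth-balanced of order `h` (every leaf at depth `h`)
mutual
def balanced : LTree A → ℕ → Prop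
  | .node _ [], h => h = 1
  | .node _ (c :: cs), h => balancedList (c :: cs) (h - 1) ∧ 2 ≤ h
def balancedList : List (A × LTree A) → ℕ → Prop
  | [], _ => True
  | (_, t) :: rest, h => balanced t h ∧ balancedList rest h
end

end LTree

/-- A tree of graph vertices: the candidate images of the nodes of a tree
under a tree-pattern. -/
inductive VTree (V : Type) : Type where
  | node : V → List (VTree V) → VTree V

namespace VTree

variable {V : Type}

/-- the vertex at the root -/
def root : VTree V → V
  | .node u _ => u

/-- the list of subtrees at the root -/
def children : VTree V → List (VTree V)
  | .node _ ps => ps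

end VTree

/-- `isPattern G t p` : the decoration `p` of the tree `t` by vertices of `G` is a
tree-pattern of `G` with respect to `t`: node labels match, every tree edge is
realized by an edge of `G` with matching label, and sibling nodes are mapped to
distinct vertices. -/
def isPattern {A : Type} (G : LGraph A) : LTree A → VTree G.V → Prop
  | .node a cs, .node u ps =>
    G.lv u = a ∧ ps.length = cs.length ∧
    (∀ i j : Fin ps.length, i ≠ j → (ps.get i).root ≠ (ps.get j).root) ∧
    ∀ i : Fin ps.length, ∀ (h : (i : ℕ) < cs.length),
      G.E u (ps.get i).root ∧ G.le u (ps.get i).root = (cs.get ⟨i, h⟩).1 ∧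
      isPattern G (cs.get ⟨i, h⟩).2 (ps.get i)
termination_by _ p => sizeOf p
decreasing_by
  have h1 : sizeOf (ps.get i) < sizeOf ps := List.sizeOf_lt_of_mem (ps.get_mem i)
  simp only [VTree.node.sizeOf_spec]
  omega

/-- `psiRoot G t u` : number of tree-patterns of `G` with respect to `t` rooted at `u`. -/
noncomputable def psiRoot {A : Type} (G : LGraph A) (t : LTree A) (u : G.V) : ℕ :=
  Set.ncard {p : VTree G.V | isPattern G t p ∧ p.root = u}

/-- `psi G t` : number of tree-patterns of `G` with respect to `t`. -/
noncomputable def psi {A : Type} (G : LGraph A) (t : LTree A) : ℕ :=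
  Set.ncard {p : VTree G.V | isPattern G t p}

/-- `isWalk G w` : `w` is a walk of length `n` in `G` (consecutive vertices joined by edges). -/
def isWalk {A : Type} (G : LGraph A) {n : ℕ} (w : Fin (n + 1) → G.V) : Prop :=
  ∀ i j : Fin (n + 1), (j : ℕ) = (i : ℕ) + 1 → G.E (w i) (w j)

/-- `noTotWalk G w` : the walk `w` is no-tottering: `v_i ≠ v_{i+2}` for all `i`. -/
def noTotWalk {A : Type} (G : LGraph A) {n : ℕ} (w : Fin (n + 1) → G.V) : Prop :=
  ∀ i j : Fin (n + 1), (j : ℕ) = (i : ℕ) + 2 → w i ≠ w j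

/-- `sameLabels G1 G2 w1 w2` : the two walks are identically labeled (corresponding
vertices and edges carry the same labels). -/
def sameLabels {A : Type} (G1 G2 : LGraph A) {n : ℕ}
    (w1 : Fin (n + 1) → G1.V) (w2 : Fin (n + 1) → G2.V) : Prop :=
  (∀ i, G1.lv (w1 i) = G2.lv (w2 i)) ∧
    (∀ i j : Fin (n + 1), (j : ℕ) = (i : ℕ) + 1 → G1.le (w1 i) (w1 j) = G2.le (w2 i) (w2 j))

/-- Walk-count kernel `K^n_Walk`: number of pairs of identically labeled walks of
length `n` in `G1` and `G2`. -/
noncomputable def walkKernel {A : Type} (G1 G2 : LGraph A) (n : ℕ) : ℝ :=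
  ∑ w1 : Fin (n + 1) → G1.V, ∑ w2 : Fin (n + 1) → G2.V,
    if isWalk G1 w1 ∧ isWalk G2 w2 ∧ sameLabels G1 G2 w1 w2 then 1 else 0

section Aux
variable {A : Type}
open LTree

-- chain trees
def chainOf : A → List (A × A) → LTree A
  | a, [] => .node a []
  | a, (e, b) :: es => .node a [(e, chainOf b es)]

lemma size_chainOf : ∀ (a : A) (es : List (A × A)), (chainOf a es).size = es.length + 1
  | _, [] => by simp [chainOf, LTree.size, LTree.sizeList]
  | a, (e, b) :: es => by
      simp [chainOf, LTree.size, LTree.sizeList, size_chainOf b es]; omega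

mutual
lemma depth_le_size : ∀ (t : LTree A), t.depth ≤ t.size
  | .node a cs => by
      simp only [LTree.depth, LTree.size]
      exact Nat.add_le_add_left (depthList_le_sizeList cs) 1
lemma depthList_le_sizeList : ∀ (l : List (A × LTree A)), LTree.depthList l ≤ LTree.sizeList l
  | [] => le_refl _
  | (e, t) :: rest => by
      simp only [LTree.depthList, LTree.sizeList]
      exact max_le (le_trans (depth_le_size t) (Nat.le_add_right _ _))
        (le_trans (depthList_le_sizeList rest) (Nat.le_add_left _ _))
end

lemma size_pos (t : LTree A) : 1 ≤ t.size := by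
  cases t with
  | node a cs => simp only [LTree.size]; omega

lemma sizeList_eq_zero : ∀ {l : List (A × LTree A)}, LTree.sizeList l = 0 → l = []
  | [], _ => rfl
  | (e, t) :: rest, h => by
      simp only [LTree.sizeList] at h
      have := size_pos t; omega

mutual
lemma bal_depth : ∀ (t : LTree A) (h : ℕ), t.balanced h → t.depth = h
  | .node a [], h, hb => by
      simp only [LTree.balanced] at hb
      simp [LTree.depth, LTree.depthList, hb]
  | .node a (c :: cs), h, hb => by
      simp only [LTree.balanced] at hb
      have h2 := bal_depthList (c :: cs) (h - 1) hb.1 (by simp)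
      simp only [LTree.depth, h2]
      omega
lemma bal_depthList : ∀ (l : List (A × LTree A)) (h : ℕ), LTree.balancedList l h →
    l ≠ [] → LTree.depthList l = h
  | [], _, _, hne => absurd rfl hne
  | (e, t) :: rest, h, hb, _ => by
      simp only [LTree.balancedList] at hb
      have h1 := bal_depth t h hb.1
      simp only [LTree.depthList, h1]
      rcases rest with _ | ⟨r, rest⟩
      · simp [LTree.depthList]
      · have h2 := bal_depthList (r :: rest) h hb.2 (by simp)
        simp [h2]
end

lemma bal_le_size {t : LTree A} {h : ℕ} (hb : t.balanced h) : h ≤ t.size :=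
  bal_depth t h hb ▸ depth_le_size t

lemma balancedList_mem : ∀ (l : List (A × LTree A)) (h : ℕ), LTree.balancedList l h →
    ∀ x ∈ l, LTree.balanced x.2 h
  | [], _, _, x, hx => absurd hx List.not_mem_nil
  | (e, t) :: rest, h, hb, x, hx => by
      simp only [LTree.balancedList] at hb
      rcases List.mem_cons.1 hx with rfl | hx
      · exact hb.1
      · exact balancedList_mem rest h hb.2 x hx

lemma chain_char : ∀ (t : LTree A) (h : ℕ), t.balanced h → t.size = h →
    ∃ a es, (es : List (A × A)).length + 1 = h ∧ t = chainOf a es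
  | .node a [], h, hb, hs => by
      simp only [LTree.balanced] at hb
      exact ⟨a, [], by simp [hb], rfl⟩
  | .node a ((e, c) :: cs), h, hb, hs => by
      simp only [LTree.balanced] at hb
      obtain ⟨hbl, hh⟩ := hb
      simp only [LTree.balancedList] at hbl
      obtain ⟨hbc, hbcs⟩ := hbl
      have hdc : c.size ≥ h - 1 := bal_le_size hbc
      simp only [LTree.size, LTree.sizeList] at hs
      have hcs0 : LTree.sizeList cs = 0 := by omega
      have hcsnil : cs = [] := sizeList_eq_zero hcs0
      have hsc : c.size = h - 1 := by omega
      obtain ⟨b, es, hlen, hce⟩ := chain_char c (h - 1) hbc hsc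
      subst hcsnil
      exact ⟨a, (e, b) :: es, by simp; omega, by simp [chainOf, hce]⟩

lemma balanced_chainOf : ∀ (a : A) (es : List (A × A)),
    (chainOf a es).balanced (es.length + 1)
  | a, [] => by simp [chainOf, LTree.balanced]
  | a, (e, b) :: es => by
      simp only [chainOf, List.length_cons, LTree.balanced, LTree.balancedList]
      exact ⟨⟨by simpa using balanced_chainOf b es, trivial⟩, by omega⟩

end Aux
section Aux2
variable {A : Type}

/-- Read off the labeled tree from a vertex tree. -/
def graphTree (G : LGraph A) : VTree G.V → LTree A
  | .node u ps => .node (G.lv u) (ps.attach.map fun q =>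
      (G.le u q.1.root, graphTree G q.1))
decreasing_by
  have := List.sizeOf_lt_of_mem q.2
  simp only [VTree.node.sizeOf_spec]; omega

theorem eq_graphTree (G : LGraph A) : (t : LTree A) → (p : VTree G.V) →
    isPattern G t p → t = graphTree G p
  | .node a cs, .node u ps, hp => by
    rw [isPattern] at hp
    obtain ⟨hlv, hlen, _, hcond⟩ := hp
    rw [graphTree]
    congr 1
    · exact hlv.symm
    · apply List.ext_get
      · simp [hlen]
      · intro i h1 h2
        rw [List.get_eq_getElem (l := List.map _ _), List.getElem_map, ← List.get_eq_getElem (i := ⟨i, by simpa using h2⟩)]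
        have hi : i < ps.length := by simpa using h2
        have hc := hcond ⟨i, hi⟩ (by simpa [hlen] using hi)
        have hrec := eq_graphTree G (cs.get ⟨i, h1⟩).2 (ps.get ⟨i, hi⟩) hc.2.2
        have : (List.attach ps).get ⟨i, by simpa using hi⟩ = ⟨ps.get ⟨i, hi⟩, ps.get_mem _⟩ := by
          simp [List.get_attach]
        rw [this]
        exact Prod.ext (hc.2.1).symm hrec
termination_by t p => sizeOf p
decreasing_by
  have h1 : sizeOf (ps.get ⟨i, hi⟩) < sizeOf ps := List.sizeOf_lt_of_mem (ps.get_mem _)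
  simp only [VTree.node.sizeOf_spec]
  omega

/-- Candidate patterns of bounded depth and bounded branching. -/
def PatSet (V : Type) [Fintype V] : ℕ → Set (VTree V)
  | 0 => ∅
  | h + 1 => {p | p.children.length ≤ Fintype.card V ∧ ∀ q ∈ p.children, q ∈ PatSet V h}

lemma finite_lists {X : Type} {S : Set X} (hS : S.Finite) (N : ℕ) :
    {l : List X | l.length ≤ N ∧ ∀ x ∈ l, x ∈ S}.Finite := by
  haveI := hS.to_subtype
  have h1 : {l : List S | l.length ≤ N}.Finite := List.finite_length_le _ N
  apply Set.Finite.subset (h1.image (List.map Subtype.val))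
  rintro l ⟨hlen, hmem⟩
  refine ⟨l.attach.map fun x => ⟨x.1, hmem x.1 x.2⟩, by simpa using hlen, ?_⟩
  simp [List.map_map, Function.comp]

lemma patSet_finite (V : Type) [Fintype V] : ∀ h, (PatSet V h).Finite
  | 0 => Set.finite_empty
  | h + 1 => by
    have ih := patSet_finite V h
    have hL := finite_lists ih (Fintype.card V)
    apply Set.Finite.subset (((Set.finite_univ (α := V)).prod hL).image
      fun ul => VTree.node ul.1 ul.2)
    rintro ⟨u, ps⟩ ⟨h1, h2⟩
    exact ⟨(u, ps), ⟨trivial, h1, h2⟩, rfl⟩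

lemma mem_patSet (G : LGraph A) : ∀ (h : ℕ) (t : LTree A) (p : VTree G.V),
    t.balanced h → isPattern G t p → p ∈ PatSet G.V h := by
  intro h
  induction h with
  | zero =>
    rintro ⟨a, cs⟩ p hb _
    rcases cs with _ | ⟨c, cs⟩ <;> simp [LTree.balanced] at hb
  | succ h ih =>
    rintro ⟨a, cs⟩ ⟨u, ps⟩ hb hp
    rw [isPattern] at hp
    obtain ⟨hlv, hlen, hdist, hcond⟩ := hp
    constructor
    · -- length bound
      have hinj : Function.Injective fun i : Fin ps.length => (ps.get i).root := by
        intro i j hij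
        by_contra hne
        exact hdist i j hne hij
      simpa [VTree.children] using Fintype.card_le_of_injective _ hinj
    · intro q hq
      simp only [VTree.children] at hq
      obtain ⟨i, rfl⟩ := List.mem_iff_get.1 hq
      have hi' : (i : ℕ) < cs.length := by rw [← hlen]; exact i.isLt
      have hc := hcond i hi'
      apply ih (cs.get ⟨i, hi'⟩).2 _ _ hc.2.2
      rcases cs with _ | ⟨c, cs⟩
      · exact absurd hi' (by simp)
      · simp only [LTree.balanced] at hb
        have : LTree.balancedList (c :: cs) (h + 1 - 1) := hb.1
        simpa using balancedList_mem _ _ this _ (List.get_mem _ ⟨i, hi'⟩)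

lemma psi_ne_zero_exists {G : LGraph A} {t : LTree A} (h : psi G t ≠ 0) :
    ∃ p, isPattern G t p := by
  by_contra hc
  push_neg at hc
  apply h
  have : {p : VTree G.V | isPattern G t p} = ∅ := by
    ext p; simpa using hc p
  simp [psi, this]

end Aux2
section Aux3
variable {A : Type}

/-- The vertex tree (linear chain) of a walk. -/
def wpat {V : Type} : ∀ {n : ℕ}, (Fin (n + 1) → V) → VTree V
  | 0, w => .node (w 0) []
  | _ + 1, w => .node (w 0) [wpat (fun i => w i.succ)]

/-- The labeled chain tree of a walk. -/
def lchain (G : LGraph A) : ∀ {n : ℕ}, (Fin (n + 1) → G.V) → LTree A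
  | 0, w => .node (G.lv (w 0)) []
  | _ + 1, w => .node (G.lv (w 0))
      [(G.le (w 0) (w 1), lchain G (fun i => w i.succ))]

lemma root_wpat {V : Type} : ∀ {n : ℕ} (w : Fin (n + 1) → V), (wpat w).root = w 0
  | 0, _ => rfl
  | _ + 1, _ => rfl

lemma fin_one_eq {n : ℕ} (hn : n = 1) (i j : Fin n) : i = j := by
  subst hn; exact Subsingleton.elim i j

lemma one_eq_succ_zero {n : ℕ} : (1 : Fin (n + 2)) = (0 : Fin (n + 1)).succ := by
  apply Fin.ext; simp

lemma tail_cases {V : Type} {n : ℕ} (u : V) (w' : Fin (n + 1) → V) :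
    (fun i : Fin (n + 1) => (Fin.cases u w' : Fin (n + 2) → V) i.succ) = w' := by
  funext i; simp

lemma lchain_cases (G : LGraph A) {n : ℕ} (u : G.V) (w' : Fin (n + 1) → G.V) :
    lchain G (Fin.cases u w') =
      .node (G.lv u) [(G.le u (w' 0), lchain G w')] := by
  rw [lchain, tail_cases]
  simp only [one_eq_succ_zero, Fin.cases_succ, Fin.cases_zero]

lemma wpat_cases {V : Type} {n : ℕ} (u : V) (w' : Fin (n + 1) → V) :
    wpat (Fin.cases u w') = .node u [wpat w'] := by
  rw [wpat, tail_cases]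
  simp

lemma isWalk_cases {G : LGraph A} {n : ℕ} {u : G.V} {w' : Fin (n + 1) → G.V}
    (hw : isWalk G w') (hE : G.E u (w' 0)) : isWalk G (Fin.cases u w') := by
  intro i j hij
  revert hij
  refine Fin.cases ?_ (fun k => ?_) i <;> intro hij
  · have hj1 : j = (0 : Fin (n + 1)).succ := by apply Fin.ext; simpa using hij
    rw [hj1]
    simp only [Fin.cases_succ, Fin.cases_zero]; exact hE
  · have hk : (k : ℕ) + 1 < n + 1 := by
      have := j.isLt
      simp [Fin.val_succ] at hij
      omega
    have hj1 : j = (⟨(k : ℕ) + 1, hk⟩ : Fin (n + 1)).succ := by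
      apply Fin.ext; simp [Fin.val_succ] at hij ⊢; omega
    rw [hj1]
    simp only [Fin.cases_succ]
    exact hw k ⟨(k : ℕ) + 1, hk⟩ rfl

lemma isWalk_tail {G : LGraph A} {n : ℕ} {w : Fin (n + 1 + 1) → G.V} (hw : isWalk G w) :
    isWalk G (fun i : Fin (n + 1) => w i.succ) := by
  intro i j hij
  exact hw i.succ j.succ (by simp [Fin.val_succ, hij])

lemma isPattern_wpat (G : LGraph A) : ∀ {n : ℕ} (w : Fin (n + 1) → G.V),
    isWalk G w → isPattern G (lchain G w) (wpat w)
  | 0, w, hw => by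
    rw [lchain, wpat, isPattern]
    refine ⟨rfl, rfl, ?_, ?_⟩
    · intro i j hij; have := i.isLt; simp at this
    · intro i; exact absurd i.isLt (by simp)
  | n + 1, w, hw => by
    rw [lchain, wpat, isPattern]
    refine ⟨rfl, rfl, ?_, ?_⟩
    · intro i j hij
      exact absurd (fin_one_eq (by simp) i j) hij
    · intro i hi
      have hi0 : i = ⟨0, by simp⟩ := by
        apply Fin.ext; have := i.isLt; simp at this ⊢; try omega
      subst hi0
      simp only [List.get]
      have hroot : (wpat fun i : Fin (n + 1) => w i.succ).root = w 1 := by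
        rw [root_wpat]; exact congrArg w one_eq_succ_zero.symm
      refine ⟨?_, ?_, ?_⟩
      · rw [hroot]; exact hw 0 1 (by simp [Fin.val_one])
      · rw [hroot]
      · exact isPattern_wpat G _ (isWalk_tail hw)

lemma wpat_injective {V : Type} : ∀ {n : ℕ} (w1 w2 : Fin (n + 1) → V),
    wpat w1 = wpat w2 → w1 = w2
  | 0, w1, w2, h => by
    rw [wpat, wpat] at h
    simp only [VTree.node.injEq] at h
    funext i
    have : i = 0 := by apply Fin.ext; have := i.isLt; omega
    rw [this]; exact h.1
  | n + 1, w1, w2, h => by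
    rw [wpat, wpat] at h
    simp only [VTree.node.injEq, List.cons.injEq, and_true] at h
    have htail := wpat_injective _ _ h.2
    funext i
    refine Fin.cases ?_ ?_ i
    · exact h.1
    · intro k; exact congrFun htail k

lemma balanced_lchain (G : LGraph A) : ∀ {n : ℕ} (w : Fin (n + 1) → G.V),
    (lchain G w).balanced (n + 1)
  | 0, w => by rw [lchain]; simp [LTree.balanced]
  | n + 1, w => by
    rw [lchain]
    simp only [LTree.balanced, LTree.balancedList]
    exact ⟨⟨by simpa using balanced_lchain G _, trivial⟩, by omega⟩

lemma size_lchain (G : LGraph A) : ∀ {n : ℕ} (w : Fin (n + 1) → G.V),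
    (lchain G w).size = n + 1
  | 0, w => by rw [lchain]; simp [LTree.size, LTree.sizeList]
  | n + 1, w => by
    rw [lchain]
    simp only [LTree.size, LTree.sizeList, size_lchain G]
    omega

lemma pattern_chain_exists (G : LGraph A) : ∀ (es : List (A × A)) (a : A)
    (p : VTree G.V), isPattern G (chainOf a es) p →
    ∃ w : Fin (es.length + 1) → G.V, isWalk G w ∧ wpat w = p ∧ lchain G w = chainOf a es
  | [], a, .node u ps, hp => by
    rw [chainOf, isPattern] at hp
    obtain ⟨hlv, hlen, -, -⟩ := hp
    have hps : ps = [] := List.length_eq_zero_iff.1 hlen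
    subst hps
    refine ⟨fun _ => u, ?_, ?_, ?_⟩
    · intro i j hij
      have hi := i.isLt; have hj := j.isLt
      simp only [List.length_nil] at hi hj
      omega
    · rw [wpat]
    · rw [lchain, chainOf, hlv]
  | (e, b) :: es, a, .node u ps, hp => by
    rw [chainOf, isPattern] at hp
    obtain ⟨hlv, hlen, -, hcond⟩ := hp
    simp only [List.length_cons, List.length_singleton] at hlen
    obtain ⟨q, hq⟩ : ∃ q, ps = [q] := List.length_eq_one_iff.1 hlen
    subst hq
    have hc := hcond ⟨0, by simp⟩ (by simp)
    simp only [List.get] at hc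
    obtain ⟨hE, hle, hpat⟩ := hc
    obtain ⟨w', hw', hwp', hlc'⟩ := pattern_chain_exists G es b q hpat
    have hroot : w' 0 = q.root := by rw [← hwp', root_wpat]
    refine ⟨Fin.cases u w', ?_, ?_, ?_⟩
    · exact isWalk_cases hw' (by rw [hroot]; exact hE)
    · show wpat (Fin.cases u w') = _
      rw [wpat_cases, hwp']
    · show lchain G (Fin.cases u w') = _
      rw [lchain_cases, hlc', chainOf, hlv, hroot, hle]

end Aux3
section Aux4
variable {A : Type}

lemma sameLabels_cons {G1 G2 : LGraph A} {n : ℕ} (w1 : Fin (n + 1 + 1) → G1.V)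
    (w2 : Fin (n + 1 + 1) → G2.V) :
    sameLabels G1 G2 w1 w2 ↔
      (G1.lv (w1 0) = G2.lv (w2 0) ∧ G1.le (w1 0) (w1 1) = G2.le (w2 0) (w2 1) ∧
        sameLabels G1 G2 (fun i : Fin (n + 1) => w1 i.succ) (fun i => w2 i.succ)) := by
  constructor
  · intro h
    refine ⟨h.1 0, h.2 0 1 (by simp [Fin.val_one]), fun i => h.1 i.succ,
      fun i j hij => h.2 i.succ j.succ (by simp [Fin.val_succ]; omega)⟩
  · rintro ⟨h1, h2, ht⟩
    constructor
    · intro i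
      refine Fin.cases ?_ (fun k => ?_) i
      · exact h1
      · exact ht.1 k
    · intro i j hij
      revert hij
      refine Fin.cases ?_ (fun k => ?_) i <;> intro hij
      · have hj : j = 1 := by apply Fin.ext; simp [Fin.val_one] at hij ⊢; omega
        rw [hj]; exact h2
      · have hk : (k : ℕ) + 1 < n + 1 := by
          have := j.isLt
          simp [Fin.val_succ] at hij
          omega
        have hj1 : j = (⟨(k : ℕ) + 1, hk⟩ : Fin (n + 1)).succ := by
          apply Fin.ext; simp [Fin.val_succ] at hij ⊢; omega
        rw [hj1]
        exact ht.2 k ⟨(k : ℕ) + 1, hk⟩ rfl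

lemma lchain_eq_iff (G1 G2 : LGraph A) : ∀ {n : ℕ} (w1 : Fin (n + 1) → G1.V)
    (w2 : Fin (n + 1) → G2.V), lchain G1 w1 = lchain G2 w2 ↔ sameLabels G1 G2 w1 w2
  | 0, w1, w2 => by
    rw [lchain, lchain]
    simp only [LTree.node.injEq, and_true]
    constructor
    · intro h
      refine ⟨fun i => ?_, fun i j hij => ?_⟩
      · have : i = 0 := by apply Fin.ext; have := i.isLt; omega
        rw [this]; exact h
      · have hi := i.isLt; have hj := j.isLt; omega
    · intro h; exact h.1 0
  | n + 1, w1, w2 => by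
    rw [lchain, lchain]
    simp only [LTree.node.injEq, List.cons.injEq, Prod.mk.injEq, and_true]
    rw [lchain_eq_iff G1 G2, sameLabels_cons]

lemma psi_chain (G : LGraph A) (a : A) (es : List (A × A)) {n : ℕ} (hn : es.length = n) :
    (psi G (chainOf a es) : ℝ) =
      ∑ w : Fin (n + 1) → G.V, if isWalk G w ∧ lchain G w = chainOf a es then 1 else 0 := by
  subst hn
  have hset : {p : VTree G.V | isPattern G (chainOf a es) p}
      = wpat '' {w : Fin (es.length + 1) → G.V | isWalk G w ∧ lchain G w = chainOf a es} := by
    ext p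
    constructor
    · intro hp
      obtain ⟨w, hw, hwp, hlc⟩ := pattern_chain_exists G es a p hp
      exact ⟨w, ⟨hw, hlc⟩, hwp⟩
    · rintro ⟨w, ⟨hw, hlc⟩, rfl⟩
      rw [← hlc]; exact isPattern_wpat G w hw
  rw [psi, hset, Set.ncard_image_of_injective _ (fun w1 w2 => wpat_injective w1 w2),
    Set.ncard_eq_toFinset_card', Set.toFinset_setOf, Finset.card_filter]
  push_cast
  rfl

end Aux4
section Main
variable {A : Type}

lemma lchain_mem_PF (G1 : LGraph A) {n : ℕ} (w : Fin (n + 1) → G1.V) (hw : isWalk G1 w) :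
    lchain G1 w ∈ (((patSet_finite G1.V (n + 1)).toFinset.image (graphTree G1)).filter
        (fun t => t.balanced (n + 1))).filter (fun t => t.size = n + 1) := by
  refine Finset.mem_filter.2 ⟨Finset.mem_filter.2 ⟨?_, balanced_lchain G1 w⟩, size_lchain G1 w⟩
  refine Finset.mem_image.2 ⟨wpat w, ?_, (eq_graphTree G1 _ _ (isPattern_wpat G1 w hw)).symm⟩
  rw [Set.Finite.mem_toFinset]
  exact mem_patSet G1 (n + 1) (lchain G1 w) (wpat w) (balanced_lchain G1 w)
    (isPattern_wpat G1 w hw)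

/-- As `λ → 0⁺`, the size-based balanced tree-pattern kernel of order `h` converges
to the walk-count kernel of length `h-1`. -/
theorem stmt_10 {A : Type} (G1 G2 : LGraph A) (h : ℕ) (hh : 1 ≤ h) :
    Filter.Tendsto
      (fun lam : ℝ =>
        ∑ᶠ t ∈ {t : LTree A | t.balanced h},
          lam ^ (t.size - h) * (psi G1 t : ℝ) * (psi G2 t : ℝ))
      (nhdsWithin 0 (Set.Ioi 0)) (nhds (walkKernel G1 G2 (h - 1))) := by
  obtain ⟨n, rfl⟩ : ∃ n, h = n + 1 := ⟨h - 1, by omega⟩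
  set PF : Finset (LTree A) :=
    ((patSet_finite G1.V (n + 1)).toFinset.image (graphTree G1)).filter
      (fun t => t.balanced (n + 1)) with hPFdef
  set PF2 : Finset (LTree A) := PF.filter (fun t => t.size = n + 1) with hPF2def
  -- Step 1: the finsum equals a fixed finite sum
  have hsum : ∀ lam : ℝ,
      (∑ᶠ t ∈ {t : LTree A | t.balanced (n + 1)},
        lam ^ (t.size - (n + 1)) * (psi G1 t : ℝ) * (psi G2 t : ℝ))
      = ∑ t ∈ PF, lam ^ (t.size - (n + 1)) * (psi G1 t : ℝ) * (psi G2 t : ℝ) := by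
    intro lam
    apply finsum_mem_eq_sum_of_inter_support_eq
    ext t
    simp only [Set.mem_inter_iff, Set.mem_setOf_eq, Function.mem_support, Finset.mem_coe]
    constructor
    · rintro ⟨hb, hne⟩
      refine ⟨?_, hne⟩
      have hpsi1 : psi G1 t ≠ 0 := by
        intro h0
        apply hne
        rw [h0]
        simp
      obtain ⟨p, hp⟩ := psi_ne_zero_exists hpsi1
      refine Finset.mem_filter.2 ⟨Finset.mem_image.2 ⟨p, ?_, (eq_graphTree G1 t p hp).symm⟩, hb⟩
      rw [Set.Finite.mem_toFinset]
      exact mem_patSet G1 (n + 1) t p hb hp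
    · rintro ⟨hmem, hne⟩
      exact ⟨(Finset.mem_filter.1 hmem).2, hne⟩
  simp only [hsum]
  -- Step 2: identify the limit value
  have key : walkKernel G1 G2 (n + 1 - 1)
      = ∑ t ∈ PF, (if t.size = n + 1 then (psi G1 t : ℝ) * (psi G2 t : ℝ) else 0) := by
    rw [← Finset.sum_filter, ← hPF2def]
    have hscongr : ∑ t ∈ PF2, (psi G1 t : ℝ) * (psi G2 t : ℝ)
        = ∑ t ∈ PF2,
          ((∑ w1 : Fin (n + 1) → G1.V, if isWalk G1 w1 ∧ lchain G1 w1 = t then (1:ℝ) else 0) *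
           (∑ w2 : Fin (n + 1) → G2.V, if isWalk G2 w2 ∧ lchain G2 w2 = t then (1:ℝ) else 0)) := by
      apply Finset.sum_congr rfl
      intro t ht
      have ht2 := Finset.mem_filter.1 ht
      have hb : t.balanced (n + 1) := (Finset.mem_filter.1 ht2.1).2
      have hsz : t.size = n + 1 := ht2.2
      obtain ⟨a, es, hlen, rfl⟩ := chain_char t (n + 1) hb hsz
      rw [psi_chain G1 a es (n := n) (by omega), psi_chain G2 a es (n := n) (by omega)]
    rw [hscongr]
    simp only [Finset.sum_mul_sum]
    have : ∀ w1 : Fin (n + 1) → G1.V,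
        (∑ w2 : Fin (n + 1) → G2.V, ∑ t ∈ PF2,
          (if isWalk G1 w1 ∧ lchain G1 w1 = t then (1:ℝ) else 0) *
          (if isWalk G2 w2 ∧ lchain G2 w2 = t then (1:ℝ) else 0))
        = ∑ w2 : Fin (n + 1) → G2.V,
            if isWalk G1 w1 ∧ isWalk G2 w2 ∧ sameLabels G1 G2 w1 w2 then (1:ℝ) else 0 := by
      intro w1
      apply Finset.sum_congr rfl
      intro w2 _
      by_cases hC : isWalk G1 w1 ∧ isWalk G2 w2 ∧ sameLabels G1 G2 w1 w2
      · rw [if_pos hC]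
        obtain ⟨hw1, hw2, hsl⟩ := hC
        have heq : lchain G1 w1 = lchain G2 w2 := (lchain_eq_iff G1 G2 w1 w2).2 hsl
        rw [Finset.sum_eq_single (lchain G1 w1)]
        · rw [if_pos ⟨hw1, rfl⟩, if_pos ⟨hw2, heq.symm⟩, one_mul]
        · intro b _ hne
          rw [if_neg, zero_mul]
          rintro ⟨-, hb⟩
          exact hne hb.symm
        · intro habs
          exact absurd (lchain_mem_PF G1 w1 hw1) habs
      · rw [if_neg hC]
        apply Finset.sum_eq_zero
        intro t _
        by_cases h1 : isWalk G1 w1 ∧ lchain G1 w1 = t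
        · by_cases h2 : isWalk G2 w2 ∧ lchain G2 w2 = t
          · exact absurd ⟨h1.1, h2.1,
              (lchain_eq_iff G1 G2 w1 w2).1 (h1.2.trans h2.2.symm)⟩ hC
          · rw [if_neg h2, mul_zero]
        · rw [if_neg h1, zero_mul]
    calc walkKernel G1 G2 (n + 1 - 1)
        = ∑ w1 : Fin (n + 1) → G1.V, ∑ w2 : Fin (n + 1) → G2.V,
            if isWalk G1 w1 ∧ isWalk G2 w2 ∧ sameLabels G1 G2 w1 w2 then (1:ℝ) else 0 := by
          rw [show n + 1 - 1 = n from rfl, walkKernel]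
      _ = ∑ w1 : Fin (n + 1) → G1.V, ∑ w2 : Fin (n + 1) → G2.V, ∑ t ∈ PF2,
            (if isWalk G1 w1 ∧ lchain G1 w1 = t then (1:ℝ) else 0) *
            (if isWalk G2 w2 ∧ lchain G2 w2 = t then (1:ℝ) else 0) := by
          exact (Finset.sum_congr rfl fun w1 _ => (this w1).symm)
      _ = ∑ t ∈ PF2, ∑ w1 : Fin (n + 1) → G1.V, ∑ w2 : Fin (n + 1) → G2.V,
            (if isWalk G1 w1 ∧ lchain G1 w1 = t then (1:ℝ) else 0) *
            (if isWalk G2 w2 ∧ lchain G2 w2 = t then (1:ℝ) else 0) := by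
          exact (Finset.sum_congr rfl fun w1 _ => Finset.sum_comm).trans Finset.sum_comm
  rw [key]
  -- Step 3: termwise limits
  apply tendsto_finset_sum
  intro t ht
  have hb : t.balanced (n + 1) := (Finset.mem_filter.1 ht).2
  by_cases hs : t.size = n + 1
  · rw [if_pos hs]
    have : (fun lam : ℝ => lam ^ (t.size - (n + 1)) * (psi G1 t : ℝ) * (psi G2 t : ℝ))
        = fun _ : ℝ => (psi G1 t : ℝ) * (psi G2 t : ℝ) := by
      funext lam
      rw [hs, Nat.sub_self, pow_zero, one_mul]
    rw [this]
    exact tendsto_const_nhds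
  · rw [if_neg hs]
    have hgt : n + 1 < t.size := lt_of_le_of_ne (bal_le_size hb) (Ne.symm hs)
    have h0 : Filter.Tendsto (fun lam : ℝ => lam ^ (t.size - (n + 1)))
        (nhdsWithin 0 (Set.Ioi 0)) (nhds 0) := by
      have hcont := ((continuous_pow (t.size - (n + 1))).tendsto (0 : ℝ)).mono_left
        (nhdsWithin_le_nhds (s := Set.Ioi (0:ℝ)))
      rwa [zero_pow (by omega : t.size - (n + 1) ≠ 0)] at hcont
    have := (h0.mul_const (psi G1 t : ℝ)).mul_const (psi G2 t : ℝ)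
    simpa using this

end Main
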